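/- Let a < b, θ₀ ∈ C⁴([a,b]), and let α₀, α₁, α₂, β₀, β₁, β₂ be real numbers. Then there is a constant C > 0, depending only on θ₀ and on the numbers α_m, β_m, such that for every δ ∈ (0, (b−a)/8) there exists θ̃₀ ∈ C⁴([a,b]) with: (i) ∂_x^{2m} θ̃₀(a) = α_m and ∂_x^{2m} θ̃₀(b) = β_m for m = 0, 1, 2; (ii) θ̃₀(x) = θ₀(x) for all x ∈ [a + 2δ, b − 2δ]; and (iii) ‖∂_x^{k}(θ̃₀ − θ₀)‖_{L²(a,b)} ≤ C δ^{1/2 − k} for every integer 0 ≤ k ≤ 4. -/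

import Mathlib

open MeasureTheory Set

noncomputable section StmtAux

def sbump : ContDiffBump (0:ℝ) := ⟨1, 2, one_pos, one_lt_two⟩

def ee (m : ℕ) : ℝ → ℝ := fun x => sbump x * (x ^ (2*m) / ((2*m).factorial : ℝ))

lemma ee_contDiff (m : ℕ) (n : ℕ∞) : ContDiff ℝ n (ee m) :=
  sbump.contDiff.mul ((contDiff_id.pow _).div_const _)

lemma ee_zero {m : ℕ} {x : ℝ} (hx : 2 ≤ |x|) : ee m x = 0 := by
  have : sbump x = 0 := sbump.zero_of_le_dist (by rw [Real.dist_eq, sub_zero]; exact hx)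
  simp [ee, this]

lemma iter_zero_fun (k : ℕ) : iteratedDeriv k (fun _ : ℝ => (0:ℝ)) = fun _ => 0 := by
  induction k with
  | zero => simp [iteratedDeriv_zero]
  | succ n ih => rw [iteratedDeriv_succ, ih]; simp

lemma ee_iter_zero {m k : ℕ} {x : ℝ} (hx : 2 < |x|) : iteratedDeriv k (ee m) x = 0 := by
  have hopen : IsOpen {y : ℝ | 2 < |y|} := isOpen_lt continuous_const continuous_abs
  have h : ee m =ᶠ[nhds x] (fun _ => 0) := by
    filter_upwards [hopen.mem_nhds hx] with y hy
    exact ee_zero (le_of_lt hy)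
  rw [h.iteratedDeriv_eq, iter_zero_fun]

lemma ee_eventually (m : ℕ) :
    ee m =ᶠ[nhds (0:ℝ)] (fun x => x ^ (2*m) / ((2*m).factorial : ℝ)) := by
  filter_upwards [sbump.eventuallyEq_one] with y hy
  simp [ee, hy]


section helpers

lemma iter2_eq (f : ℝ → ℝ) : iteratedDeriv 2 f = deriv (deriv f) := by
  rw [iteratedDeriv_eq_iterate]; rfl

lemma iter4_eq (f : ℝ → ℝ) : iteratedDeriv 4 f = deriv (deriv (deriv (deriv f))) := by
  rw [iteratedDeriv_eq_iterate]; rfl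

lemma dp2 : deriv (fun x : ℝ => x^2/2) = fun x : ℝ => x := by
  funext x; rw [deriv_div_const, deriv_pow_field]; ring

lemma dp4 : deriv (fun x : ℝ => x^4/24) = fun x : ℝ => x^3/6 := by
  funext x; rw [deriv_div_const, deriv_pow_field]; ring

lemma dp3 : deriv (fun x : ℝ => x^3/6) = fun x : ℝ => x^2/2 := by
  funext x; rw [deriv_div_const, deriv_pow_field]; ring

-- iterated derivatives of the model monomials at 0
example : iteratedDeriv 2 (fun x : ℝ => x^2/2) 0 = 1 := by
  rw [iter2_eq, dp2]; simp

example : iteratedDeriv 4 (fun x : ℝ => x^2/2) 0 = 0 := by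
  rw [iter4_eq, dp2]; simp

example : iteratedDeriv 2 (fun x : ℝ => x^4/24) 0 = 0 := by
  rw [iter2_eq, dp4, dp3]; simp

example : iteratedDeriv 4 (fun x : ℝ => x^4/24) 0 = 1 := by
  rw [iter4_eq, dp4, dp3, dp2]; simp

example : iteratedDeriv 2 (fun _ : ℝ => (1:ℝ)) 0 = 0 := by
  rw [iter2_eq]; simp

example : iteratedDeriv 4 (fun _ : ℝ => (1:ℝ)) 0 = 0 := by
  rw [iter4_eq]; simp

lemma iter_add' (k : ℕ) {f g : ℝ → ℝ} (hf : ContDiff ℝ k f) (hg : ContDiff ℝ k g) (x : ℝ) :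
    iteratedDeriv k (fun y => f y + g y) x = iteratedDeriv k f x + iteratedDeriv k g x := by
  simp only [← iteratedDerivWithin_univ]
  exact iteratedDerivWithin_add (Set.mem_univ x) uniqueDiffOn_univ hf.contDiffAt.contDiffWithinAt hg.contDiffAt.contDiffWithinAt

lemma iter_cmul' (k : ℕ) (c : ℝ) {f : ℝ → ℝ} (hf : ContDiff ℝ k f) (x : ℝ) :
    iteratedDeriv k (fun y => c * f y) x = c * iteratedDeriv k f x := by
  simp only [← iteratedDerivWithin_univ]
  exact iteratedDerivWithin_const_mul (Set.mem_univ x) uniqueDiffOn_univ c hf.contDiffAt.contDiffWithinAt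

lemma iter_affine (k : ℕ) {ψ : ℝ → ℝ} (hψ : ContDiff ℝ k ψ) (c s x : ℝ) :
    iteratedDeriv k (fun y => ψ (c * (y + s))) x = c ^ k * iteratedDeriv k ψ (c * (x + s)) := by
  exact (congrFun (iteratedDeriv_comp_add_const k (fun w => ψ (c * w)) s) x).trans
    (congrFun (iteratedDeriv_comp_const_mul hψ c) (x + s))



-- values of iterated derivatives of ee at 0
lemma ee0_val : ee 0 0 = 1 := by
  have h1 : sbump (0:ℝ) = 1 := sbump.one_of_mem_closedBall (by simp [sbump])
  simp [ee, h1]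

lemma ee1_val : ee 1 0 = 0 := by simp [ee]
lemma ee2_val : ee 2 0 = 0 := by simp [ee]

lemma ee0_iter2 : iteratedDeriv 2 (ee 0) 0 = 0 := by
  rw [(ee_eventually 0).iteratedDeriv_eq]
  have : (fun x : ℝ => x ^ (2*0) / ((2*0).factorial : ℝ)) = fun _ : ℝ => (1:ℝ) := by
    funext x; norm_num
  rw [this, iter2_eq]; simp

lemma ee0_iter4 : iteratedDeriv 4 (ee 0) 0 = 0 := by
  rw [(ee_eventually 0).iteratedDeriv_eq]
  have : (fun x : ℝ => x ^ (2*0) / ((2*0).factorial : ℝ)) = fun _ : ℝ => (1:ℝ) := by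
    funext x; norm_num
  rw [this, iter4_eq]; simp

lemma ee1_poly : (fun x : ℝ => x ^ (2*1) / ((2*1).factorial : ℝ)) = fun x : ℝ => x^2/2 := by
  funext x; norm_num [Nat.factorial]

lemma ee2_poly : (fun x : ℝ => x ^ (2*2) / ((2*2).factorial : ℝ)) = fun x : ℝ => x^4/24 := by
  funext x; norm_num [Nat.factorial]

lemma ee1_iter2 : iteratedDeriv 2 (ee 1) 0 = 1 := by
  rw [(ee_eventually 1).iteratedDeriv_eq, ee1_poly, iter2_eq, dp2]; simp

lemma ee1_iter4 : iteratedDeriv 4 (ee 1) 0 = 0 := by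
  rw [(ee_eventually 1).iteratedDeriv_eq, ee1_poly, iter4_eq, dp2]; simp

lemma ee2_iter2 : iteratedDeriv 2 (ee 2) 0 = 0 := by
  rw [(ee_eventually 2).iteratedDeriv_eq, ee2_poly, iter2_eq, dp4, dp3]; simp

lemma ee2_iter4 : iteratedDeriv 4 (ee 2) 0 = 1 := by
  rw [(ee_eventually 2).iteratedDeriv_eq, ee2_poly, iter4_eq, dp4, dp3, dp2]; simp

-- the linear combination
def comb (p q r : ℝ) : ℝ → ℝ := fun u => p * ee 0 u + q * ee 1 u + r * ee 2 u

lemma comb_contDiff (p q r : ℝ) (n : ℕ∞) : ContDiff ℝ n (comb p q r) :=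
  (((contDiff_const.mul (ee_contDiff 0 n)).add (contDiff_const.mul (ee_contDiff 1 n))).add
    (contDiff_const.mul (ee_contDiff 2 n)))

lemma comb_iter (p q r : ℝ) (k : ℕ) (x : ℝ) :
    iteratedDeriv k (comb p q r) x =
      p * iteratedDeriv k (ee 0) x + q * iteratedDeriv k (ee 1) x
        + r * iteratedDeriv k (ee 2) x := by
  have h01 : ContDiff ℝ k (fun u => p * ee 0 u) := contDiff_const.mul (ee_contDiff 0 k)
  have h11 : ContDiff ℝ k (fun u => q * ee 1 u) := contDiff_const.mul (ee_contDiff 1 k)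
  have h21 : ContDiff ℝ k (fun u => r * ee 2 u) := contDiff_const.mul (ee_contDiff 2 k)
  rw [show comb p q r = fun u => (p * ee 0 u + q * ee 1 u) + r * ee 2 u from rfl,
    iter_add' k (h01.add h11) h21 x, iter_add' k h01 h11 x,
    iter_cmul' k p (ee_contDiff 0 k) x, iter_cmul' k q (ee_contDiff 1 k) x,
    iter_cmul' k r (ee_contDiff 2 k) x]

lemma comb_val0 (p q r : ℝ) : comb p q r 0 = p := by
  simp [comb, ee0_val, ee1_val, ee2_val]

lemma comb_iter2 (p q r : ℝ) : iteratedDeriv 2 (comb p q r) 0 = q := by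
  rw [comb_iter, ee0_iter2, ee1_iter2, ee2_iter2]; ring

lemma comb_iter4 (p q r : ℝ) : iteratedDeriv 4 (comb p q r) 0 = r := by
  rw [comb_iter, ee0_iter4, ee1_iter4, ee2_iter4]; ring

lemma comb_far {u : ℝ} (p q r : ℝ) (hu : 2 ≤ |u|) : comb p q r u = 0 := by
  simp [comb, ee_zero hu]

lemma comb_iter_far {u : ℝ} (p q r : ℝ) (k : ℕ) (hu : 2 < |u|) :
    iteratedDeriv k (comb p q r) u = 0 := by
  rw [comb_iter, ee_iter_zero hu, ee_iter_zero hu, ee_iter_zero hu]; ring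

lemma comb_iter_bound {M : ℝ} (p q r : ℝ) (k : ℕ)
    (h0 : ∀ x, |iteratedDeriv k (ee 0) x| ≤ M)
    (h1 : ∀ x, |iteratedDeriv k (ee 1) x| ≤ M)
    (h2 : ∀ x, |iteratedDeriv k (ee 2) x| ≤ M) (u : ℝ) :
    |iteratedDeriv k (comb p q r) u| ≤ (|p| + |q| + |r|) * M := by
  have hM : 0 ≤ M := le_trans (abs_nonneg _) (h0 0)
  rw [comb_iter]
  calc |p * iteratedDeriv k (ee 0) u + q * iteratedDeriv k (ee 1) u
        + r * iteratedDeriv k (ee 2) u|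
      ≤ |p * iteratedDeriv k (ee 0) u + q * iteratedDeriv k (ee 1) u|
        + |r * iteratedDeriv k (ee 2) u| := abs_add_le _ _
    _ ≤ (|p * iteratedDeriv k (ee 0) u| + |q * iteratedDeriv k (ee 1) u|)
        + |r * iteratedDeriv k (ee 2) u| := by gcongr; exact abs_add_le _ _
    _ ≤ (|p| * M + |q| * M) + |r| * M := by
        rw [abs_mul, abs_mul, abs_mul]
        gcongr
        exacts [h0 u, h1 u, h2 u]
    _ = (|p| + |q| + |r|) * M := by ring

lemma ee_bound (m k : ℕ) : ∃ M : ℝ, 0 ≤ M ∧ ∀ x, |iteratedDeriv k (ee m) x| ≤ M := by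
  have hc : Continuous fun x => |iteratedDeriv k (ee m) x| :=
    ((ee_contDiff m k).continuous_iteratedDeriv k (by exact_mod_cast le_rfl)).abs
  obtain ⟨z, _, hmax⟩ := (isCompact_Icc (a := (-3:ℝ)) (b := 3)).exists_isMaxOn
    ⟨0, by norm_num⟩ hc.continuousOn
  refine ⟨|iteratedDeriv k (ee m) z|, abs_nonneg _, fun x => ?_⟩
  by_cases hx : x ∈ Icc (-3:ℝ) 3
  · exact hmax hx
  · have : 2 < |x| := by
      simp only [mem_Icc, not_and_or, not_le] at hx
      rcases hx with h | h
      · rw [abs_of_neg (by linarith)]; linarith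
      · rw [abs_of_pos (by linarith)]; linarith
    rw [ee_iter_zero this]; simpa using abs_nonneg _
-- the perturbation built from two profiles
def pertF (δ a b : ℝ) (ψa ψb : ℝ → ℝ) : ℝ → ℝ :=
  fun x => ψa (1/δ * (x + -a)) + ψb (-(1/δ) * (x + -b))

lemma pertF_contDiff (δ a b : ℝ) (ψa ψb : ℝ → ℝ)
    (hψa : ∀ n : ℕ∞, ContDiff ℝ n ψa) (hψb : ∀ n : ℕ∞, ContDiff ℝ n ψb) (n : ℕ∞) :
    ContDiff ℝ n (pertF δ a b ψa ψb) := by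
  unfold pertF
  exact ((hψa n).comp (contDiff_const.mul (contDiff_id.add contDiff_const))).add
    ((hψb n).comp (contDiff_const.mul (contDiff_id.add contDiff_const)))

lemma pertF_iter (δ a b : ℝ) (ψa ψb : ℝ → ℝ)
    (hψa : ∀ n : ℕ∞, ContDiff ℝ n ψa) (hψb : ∀ n : ℕ∞, ContDiff ℝ n ψb) (k : ℕ) (x : ℝ) :
    iteratedDeriv k (pertF δ a b ψa ψb) x
      = (1/δ)^k * iteratedDeriv k ψa (1/δ * (x + -a))
        + (-(1/δ))^k * iteratedDeriv k ψb (-(1/δ) * (x + -b)) := by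
  unfold pertF
  have h1 : ContDiff ℝ k (fun y : ℝ => ψa (1/δ * (y + -a))) :=
    (hψa k).comp (contDiff_const.mul (contDiff_id.add contDiff_const))
  have h2 : ContDiff ℝ k (fun y : ℝ => ψb (-(1/δ) * (y + -b))) :=
    (hψb k).comp (contDiff_const.mul (contDiff_id.add contDiff_const))
  rw [iter_add' k h1 h2 x, iter_affine k (hψa k) (1/δ) (-a) x,
    iter_affine k (hψb k) (-(1/δ)) (-b) x]

-- the L² bound for a function supported near the endpoints
lemma sqL2 (a b δ B : ℝ) (g : ℝ → ℝ) (hg : Continuous g) (hδ0 : 0 < δ)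
    (hB : ∀ x, |g x| ≤ B)
    (h0 : ∀ x, a + 2*δ < x → x < b - 2*δ → g x = 0) :
    Real.sqrt (∫ x in Icc a b, (g x)^2) ≤ 2*B*Real.sqrt δ := by
  have hB0 : 0 ≤ B := le_trans (abs_nonneg _) (hB 0)
  set S : Set ℝ := Icc a (a + 2*δ) ∪ Icc (b - 2*δ) b with hSdef
  have hSmeas : MeasurableSet S := measurableSet_Icc.union measurableSet_Icc
  have hmono : ∀ x ∈ Icc a b, (g x)^2 ≤ S.indicator (fun _ => B^2) x := by
    intro x hx
    by_cases hxS : x ∈ S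
    · rw [indicator_of_mem hxS]
      have h := abs_le.mp (hB x)
      exact sq_le_sq' (by linarith [h.1]) h.2
    · rw [indicator_of_notMem hxS]
      obtain ⟨hax, hxb⟩ := hx
      rw [hSdef] at hxS
      simp only [mem_union, mem_Icc, not_or, not_and_or, not_le] at hxS
      obtain ⟨hxa', hxb'⟩ := hxS
      have hx1 : a + 2*δ < x := by
        rcases hxa' with h | h
        · linarith
        · exact h
      have hx2 : x < b - 2*δ := by
        rcases hxb' with h | h
        · exact h
        · linarith
      rw [h0 x hx1 hx2]
      norm_num
  have hint1 : IntegrableOn (fun x => (g x)^2) (Icc a b) volume :=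
    (hg.pow 2).integrableOn_Icc
  have hint2 : IntegrableOn (S.indicator (fun _ => B^2)) (Icc a b) volume :=
    (integrableOn_const measure_Icc_lt_top.ne).indicator hSmeas
  have hvol : (volume (Icc a b ∩ S)).toReal ≤ 4*δ := by
    have h1 : volume (Icc a b ∩ S) ≤ ENNReal.ofReal (4*δ) := by
      refine le_trans (measure_mono inter_subset_right) ?_
      rw [hSdef]
      refine le_trans (measure_union_le _ _) ?_
      rw [Real.volume_Icc, Real.volume_Icc,
        ← ENNReal.ofReal_add (by linarith) (by linarith)]
      exact ENNReal.ofReal_le_ofReal (by linarith)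
    exact ENNReal.toReal_le_of_le_ofReal (by linarith) h1
  have hle : (∫ x in Icc a b, (g x)^2) ≤ B^2 * (4*δ) := by
    calc (∫ x in Icc a b, (g x)^2)
        ≤ ∫ x in Icc a b, S.indicator (fun _ => B^2) x :=
          setIntegral_mono_on hint1 hint2 measurableSet_Icc hmono
      _ = ∫ _x in Icc a b ∩ S, B^2 := setIntegral_indicator hSmeas
      _ = (volume (Icc a b ∩ S)).toReal • B^2 := setIntegral_const _
      _ ≤ (4*δ) * B^2 := by
          rw [smul_eq_mul]
          exact mul_le_mul_of_nonneg_right hvol (by positivity)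
      _ = B^2 * (4*δ) := by ring
  calc Real.sqrt (∫ x in Icc a b, (g x)^2)
      ≤ Real.sqrt (B^2 * (4*δ)) := Real.sqrt_le_sqrt hle
    _ = 2*B*Real.sqrt δ := by
        rw [show B^2*(4*δ) = (2*B)^2 * δ by ring, Real.sqrt_mul (by positivity) δ,
          Real.sqrt_sq (by positivity)]

-- the rpow arithmetic
lemma rpow_step (δ K : ℝ) (k : ℕ) (hδ0 : 0 < δ) (hK : 0 ≤ K) :
    2*((1/δ)^k*K)*Real.sqrt δ ≤ (2*K+1) * δ^((1:ℝ)/2 - (k:ℝ)) := by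
  have hδne : δ ≠ 0 := ne_of_gt hδ0
  have hrpos : (0:ℝ) < δ^((1:ℝ)/2 - (k:ℝ)) := Real.rpow_pos_of_pos hδ0 _
  have heq : 2*((1/δ)^k*K)*Real.sqrt δ = 2*K * δ^((1:ℝ)/2 - (k:ℝ)) := by
    rw [Real.rpow_sub hδ0, Real.rpow_natCast, Real.sqrt_eq_rpow]
    have hpk : δ^k ≠ 0 := pow_ne_zero k hδne
    field_simp
    rw [div_pow, one_pow, div_mul_eq_mul_div, one_mul, div_mul_cancel₀ _ hpk]
  rw [heq]
  exact mul_le_mul_of_nonneg_right (by linarith) hrpos.le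
theorem keyConstruction (a b δ : ℝ) (θ₀ ψa ψb : ℝ → ℝ) (hθ₀ : ContDiff ℝ 4 θ₀)
    (A0 A2 A4 B0 B2 B4 K : ℝ)
    (hδ0 : 0 < δ) (hgap : 8*δ < b - a)
    (hψaC : ∀ n : ℕ∞, ContDiff ℝ n ψa) (hψbC : ∀ n : ℕ∞, ContDiff ℝ n ψb)
    (ha0 : ψa 0 = A0) (ha2 : iteratedDeriv 2 ψa 0 = A2) (ha4 : iteratedDeriv 4 ψa 0 = A4)
    (hb0 : ψb 0 = B0) (hb2 : iteratedDeriv 2 ψb 0 = B2) (hb4 : iteratedDeriv 4 ψb 0 = B4)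
    (hafar : ∀ u : ℝ, 2 ≤ |u| → ψa u = 0) (hbfar : ∀ u : ℝ, 2 ≤ |u| → ψb u = 0)
    (haifar : ∀ (k : ℕ) (u : ℝ), 2 < |u| → iteratedDeriv k ψa u = 0)
    (hbifar : ∀ (k : ℕ) (u : ℝ), 2 < |u| → iteratedDeriv k ψb u = 0)
    (hKbnd : ∀ k : ℕ, k ≤ 4 → ∀ u v : ℝ, |iteratedDeriv k ψa u| + |iteratedDeriv k ψb v| ≤ K) :
    ∃ θt : ℝ → ℝ, ContDiff ℝ 4 θt ∧
      θt a = θ₀ a + A0 ∧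
      iteratedDeriv 2 θt a = iteratedDeriv 2 θ₀ a + (1/δ)^2 * A2 ∧
      iteratedDeriv 4 θt a = iteratedDeriv 4 θ₀ a + (1/δ)^4 * A4 ∧
      θt b = θ₀ b + B0 ∧
      iteratedDeriv 2 θt b = iteratedDeriv 2 θ₀ b + (1/δ)^2 * B2 ∧
      iteratedDeriv 4 θt b = iteratedDeriv 4 θ₀ b + (1/δ)^4 * B4 ∧
      (∀ x ∈ Icc (a + 2*δ) (b - 2*δ), θt x = θ₀ x) ∧
      (∀ k : ℕ, k ≤ 4 →
        Real.sqrt (∫ x in Icc a b, (iteratedDeriv k θt x - iteratedDeriv k θ₀ x)^2)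
          ≤ 2*((1/δ)^k * K)*Real.sqrt δ) := by
  have hδne : δ ≠ 0 := ne_of_gt hδ0
  set P : ℝ → ℝ := pertF δ a b ψa ψb with hP
  have hPC : ∀ n : ℕ∞, ContDiff ℝ n P := fun n => pertF_contDiff δ a b ψa ψb hψaC hψbC n
  have hPD : ∀ (k : ℕ) (x : ℝ), iteratedDeriv k P x
      = (1/δ)^k * iteratedDeriv k ψa (1/δ * (x + -a))
        + (-(1/δ))^k * iteratedDeriv k ψb (-(1/δ) * (x + -b)) :=
    fun k x => pertF_iter δ a b ψa ψb hψaC hψbC k x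
  -- useful argument values
  have ea : 1/δ * (a + -a) = 0 := by ring
  have eb : -(1/δ) * (b + -b) = 0 := by ring
  have eab : -(1/δ) * (a + -b) = (b - a)/δ := by ring
  have eba : 1/δ * (b + -a) = (b - a)/δ := by ring
  have hfar : 2 < (b - a)/δ := by
    rw [lt_div_iff₀ hδ0]; linarith
  have hfarabs : (2:ℝ) < |(b - a)/δ| := by
    rw [abs_of_pos (by linarith)]; exact hfar
  have hθk : ∀ k : ℕ, k ≤ 4 → ∀ x, iteratedDeriv k (fun y => θ₀ y + P y) x
      = iteratedDeriv k θ₀ x + iteratedDeriv k P x := by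
    intro k hk x
    have h4 : (k : WithTop ℕ∞) ≤ 4 := by exact_mod_cast hk
    exact iter_add' k (hθ₀.of_le h4) (hPC k) x
  refine ⟨fun x => θ₀ x + P x, ?_, ?_, ?_, ?_, ?_, ?_, ?_, ?_, ?_⟩
  · exact hθ₀.add (by exact_mod_cast hPC 4)
  · show θ₀ a + P a = θ₀ a + A0
    have : P a = A0 := by
      rw [hP]
      show ψa (1/δ * (a + -a)) + ψb (-(1/δ) * (a + -b)) = A0
      rw [ea, eab, ha0, hbfar _ hfarabs.le]
      ring
    rw [this]
  · rw [hθk 2 (by norm_num) a, hPD 2 a, ea, eab, ha2, hbifar 2 _ hfarabs]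
    ring
  · rw [hθk 4 (by norm_num) a, hPD 4 a, ea, eab, ha4, hbifar 4 _ hfarabs]
    ring
  · show θ₀ b + P b = θ₀ b + B0
    have : P b = B0 := by
      rw [hP]
      show ψa (1/δ * (b + -a)) + ψb (-(1/δ) * (b + -b)) = B0
      rw [eb, eba, hb0, hafar _ hfarabs.le]
      ring
    rw [this]
  · rw [hθk 2 (by norm_num) b, hPD 2 b, eb, eba, hb2, haifar 2 _ hfarabs]
    ring
  · rw [hθk 4 (by norm_num) b, hPD 4 b, eb, eba, hb4, haifar 4 _ hfarabs]
    ring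
  · intro x hx
    obtain ⟨hx1, hx2⟩ := hx
    show θ₀ x + P x = θ₀ x
    have h1 : ψa (1/δ * (x + -a)) = 0 := by
      refine hafar _ ?_
      have h2d : 2 * δ ≤ x + -a := by linarith
      have : (2:ℝ) ≤ 1/δ * (x + -a) := by
        calc (2:ℝ) = 1/δ * (2*δ) := by field_simp
          _ ≤ 1/δ * (x + -a) := by
              apply mul_le_mul_of_nonneg_left h2d (by positivity)
      rw [abs_of_nonneg (by linarith)]; exact this
    have h2 : ψb (-(1/δ) * (x + -b)) = 0 := by
      refine hbfar _ ?_
      have h2d : 2 * δ ≤ -(x + -b) := by linarith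
      have : (2:ℝ) ≤ -(1/δ) * (x + -b) := by
        calc (2:ℝ) = 1/δ * (2*δ) := by field_simp
          _ ≤ 1/δ * (-(x + -b)) := by
              apply mul_le_mul_of_nonneg_left h2d (by positivity)
          _ = -(1/δ) * (x + -b) := by ring
      rw [abs_of_nonneg (by linarith)]; exact this
    have : P x = 0 := by
      rw [hP]
      show ψa (1/δ * (x + -a)) + ψb (-(1/δ) * (x + -b)) = 0
      rw [h1, h2]; ring
    rw [this, add_zero]
  · intro k hk
    have hK0 : 0 ≤ K :=
      le_trans (by positivity) (hKbnd k hk 0 0)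
    have hgcont : Continuous (iteratedDeriv k P) :=
      (hPC k).continuous_iteratedDeriv k (by exact_mod_cast le_rfl)
    have hbound : ∀ x : ℝ, |iteratedDeriv k P x| ≤ (1/δ)^k * K := by
      intro x
      rw [hPD k x]
      have hδk : (0:ℝ) ≤ (1/δ)^k := by positivity
      calc |(1/δ)^k * iteratedDeriv k ψa (1/δ * (x + -a))
            + (-(1/δ))^k * iteratedDeriv k ψb (-(1/δ) * (x + -b))|
          ≤ |(1/δ)^k * iteratedDeriv k ψa (1/δ * (x + -a))|
            + |(-(1/δ))^k * iteratedDeriv k ψb (-(1/δ) * (x + -b))| := abs_add_le _ _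
        _ = (1/δ)^k * (|iteratedDeriv k ψa (1/δ * (x + -a))|
            + |iteratedDeriv k ψb (-(1/δ) * (x + -b))|) := by
            rw [abs_mul, abs_mul, abs_pow, abs_pow, abs_neg,
              abs_of_nonneg (le_of_lt (by positivity : (0:ℝ) < 1/δ))]
            ring
        _ ≤ (1/δ)^k * K := by
            apply mul_le_mul_of_nonneg_left (hKbnd k hk _ _) hδk
    have hzero : ∀ x : ℝ, a + 2*δ < x → x < b - 2*δ → iteratedDeriv k P x = 0 := by
      intro x h1 h2
      rw [hPD k x]
      have u2 : 2 < 1/δ * (x + -a) := by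
        have h2d : 2*δ < x + -a := by linarith
        calc (2:ℝ) = 1/δ * (2*δ) := by field_simp
          _ < 1/δ * (x + -a) := by
              apply mul_lt_mul_of_pos_left h2d (by positivity)
      have v2 : 2 < -(1/δ) * (x + -b) := by
        have h2d : 2*δ < -(x + -b) := by linarith
        calc (2:ℝ) = 1/δ * (2*δ) := by field_simp
          _ < 1/δ * (-(x + -b)) := by
              apply mul_lt_mul_of_pos_left h2d (by positivity)
          _ = -(1/δ) * (x + -b) := by ring
      rw [haifar k _ (by rw [abs_of_pos (by linarith)]; exact u2),
        hbifar k _ (by rw [abs_of_pos (by linarith)]; exact v2)]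
      ring
    have hIeq : (∫ x in Icc a b, (iteratedDeriv k (fun y => θ₀ y + P y) x
        - iteratedDeriv k θ₀ x)^2) = ∫ x in Icc a b, (iteratedDeriv k P x)^2 := by
      have hFrw : ∀ x : ℝ, (iteratedDeriv k (fun y => θ₀ y + P y) x
          - iteratedDeriv k θ₀ x)^2 = (iteratedDeriv k P x)^2 := by
        intro x; rw [hθk k hk x]; ring
      simp only [hFrw]
    rw [hIeq]
    exact sqL2 a b δ ((1/δ)^k * K) (iteratedDeriv k P) hgcont hδ0 hbound hzero
lemma comb_pair_bound (p0 p2 p4 q0 q2 q4 D : ℝ) (hD0 : 0 < D) :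
    ∃ K : ℝ, 0 ≤ K ∧ ∀ δ : ℝ, 0 < δ → δ ≤ D → ∀ k : ℕ, k ≤ 4 → ∀ u v : ℝ,
      |iteratedDeriv k (comb p0 (δ^2*p2) (δ^4*p4)) u|
        + |iteratedDeriv k (comb q0 (δ^2*q2) (δ^4*q4)) v| ≤ K := by
  have hMex : ∀ k : ℕ, ∃ M : ℝ, 0 ≤ M ∧
      (∀ x, |iteratedDeriv k (ee 0) x| ≤ M) ∧
      (∀ x, |iteratedDeriv k (ee 1) x| ≤ M) ∧
      (∀ x, |iteratedDeriv k (ee 2) x| ≤ M) := by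
    intro k
    obtain ⟨M0, h00, h0⟩ := ee_bound 0 k
    obtain ⟨M1, h10, h1⟩ := ee_bound 1 k
    obtain ⟨M2, h20, h2⟩ := ee_bound 2 k
    exact ⟨M0 + M1 + M2, by linarith,
      fun x => (h0 x).trans (by linarith),
      fun x => (h1 x).trans (by linarith),
      fun x => (h2 x).trans (by linarith)⟩
  choose Mf hMf0 hMfa hMfb hMfc using hMex
  have hMt0 : 0 ≤ Mf 0 + Mf 1 + Mf 2 + Mf 3 + Mf 4 := by
    have := hMf0 0; have := hMf0 1; have := hMf0 2; have := hMf0 3; have := hMf0 4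
    linarith
  set Mt : ℝ := Mf 0 + Mf 1 + Mf 2 + Mf 3 + Mf 4 with hMt
  have hMtk : ∀ k : ℕ, k ≤ 4 → Mf k ≤ Mt := by
    intro k hk
    have := hMf0 0; have := hMf0 1; have := hMf0 2; have := hMf0 3; have := hMf0 4
    interval_cases k <;> simp only [hMt] <;> linarith
  set A : ℝ := |p0| + |p2| + |p4| + |q0| + |q2| + |q4| with hA
  have hA0 : 0 ≤ A := by
    have := abs_nonneg p0; have := abs_nonneg p2; have := abs_nonneg p4
    have := abs_nonneg q0; have := abs_nonneg q2; have := abs_nonneg q4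
    simp only [hA]; linarith
  refine ⟨2*((1 + D^2 + D^4) * (A + 1) * (Mt + 1)), by positivity, ?_⟩
  intro δ hδ0 hδD k hk u v
  have hd2 : δ^2 ≤ D^2 := pow_le_pow_left₀ hδ0.le hδD 2
  have hd4 : δ^4 ≤ D^4 := pow_le_pow_left₀ hδ0.le hδD 4
  have hMk : Mf k ≤ Mt + 1 := by linarith [hMtk k hk]
  have hMk0 : 0 ≤ Mf k := hMf0 k
  have habs : |p0| ≤ A ∧ |p2| ≤ A ∧ |p4| ≤ A ∧ |q0| ≤ A ∧ |q2| ≤ A ∧ |q4| ≤ A := by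
    have := abs_nonneg p0; have := abs_nonneg p2; have := abs_nonneg p4
    have := abs_nonneg q0; have := abs_nonneg q2; have := abs_nonneg q4
    simp only [hA]
    refine ⟨by linarith, by linarith, by linarith, by linarith, by linarith, by linarith⟩
  obtain ⟨ha0, ha2, ha4, hb0, hb2, hb4⟩ := habs
  have hSa : |p0| + |δ^2 * p2| + |δ^4 * p4| ≤ (1 + D^2 + D^4) * (A + 1) := by
    rw [abs_mul, abs_mul, abs_of_nonneg (show (0:ℝ) ≤ δ^2 by positivity),
      abs_of_nonneg (show (0:ℝ) ≤ δ^4 by positivity)]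
    have t2 : δ^2 * |p2| ≤ D^2 * (A+1) :=
      mul_le_mul hd2 (by linarith) (abs_nonneg _) (by positivity)
    have t3 : δ^4 * |p4| ≤ D^4 * (A+1) :=
      mul_le_mul hd4 (by linarith) (abs_nonneg _) (by positivity)
    nlinarith [t2, t3]
  have hSb : |q0| + |δ^2 * q2| + |δ^4 * q4| ≤ (1 + D^2 + D^4) * (A + 1) := by
    rw [abs_mul, abs_mul, abs_of_nonneg (show (0:ℝ) ≤ δ^2 by positivity),
      abs_of_nonneg (show (0:ℝ) ≤ δ^4 by positivity)]
    have t2 : δ^2 * |q2| ≤ D^2 * (A+1) :=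
      mul_le_mul hd2 (by linarith) (abs_nonneg _) (by positivity)
    have t3 : δ^4 * |q4| ≤ D^4 * (A+1) :=
      mul_le_mul hd4 (by linarith) (abs_nonneg _) (by positivity)
    nlinarith [t2, t3]
  have ba : |iteratedDeriv k (comb p0 (δ^2*p2) (δ^4*p4)) u|
      ≤ (1 + D^2 + D^4) * (A + 1) * (Mt + 1) := by
    refine le_trans (comb_iter_bound p0 (δ^2*p2) (δ^4*p4) k (hMfa k) (hMfb k) (hMfc k) u) ?_
    exact mul_le_mul hSa hMk hMk0 (by positivity)
  have bb : |iteratedDeriv k (comb q0 (δ^2*q2) (δ^4*q4)) v|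
      ≤ (1 + D^2 + D^4) * (A + 1) * (Mt + 1) := by
    refine le_trans (comb_iter_bound q0 (δ^2*q2) (δ^4*q4) k (hMfa k) (hMfb k) (hMfc k) v) ?_
    exact mul_le_mul hSb hMk hMk0 (by positivity)
  linarith

/-- Construction of a compatible modification of the initial datum: given `θ₀ ∈ C⁴([a,b])`
and target endpoint values `α₀, α₁, α₂, β₀, β₁, β₂` for the even-order derivatives, there is
a constant `C` (depending only on `θ₀` and these values) such that for every small `δ`
there exists `θ̃₀ ∈ C⁴` matching the endpoint values, agreeing with `θ₀` on
`[a + 2δ, b - 2δ]`, and with `‖∂_x^k (θ̃₀ - θ₀)‖_{L²(a,b)} ≤ C δ^{1/2 - k}` for `k ≤ 4`. -/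
theorem stmt16 (a b : ℝ) (hab : a < b)
    (θ₀ : ℝ → ℝ) (hθ₀ : ContDiff ℝ 4 θ₀)
    (α₀ α₁ α₂ β₀ β₁ β₂ : ℝ) :
    ∃ C : ℝ, 0 < C ∧
      ∀ δ : ℝ, δ ∈ Ioo (0:ℝ) ((b - a) / 8) →
        ∃ θt : ℝ → ℝ, ContDiff ℝ 4 θt ∧
          -- (i) prescribed even-order derivatives at the endpoints:
          θt a = α₀ ∧ iteratedDeriv 2 θt a = α₁ ∧ iteratedDeriv 4 θt a = α₂ ∧
          θt b = β₀ ∧ iteratedDeriv 2 θt b = β₁ ∧ iteratedDeriv 4 θt b = β₂ ∧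
          -- (ii) agreement with `θ₀` away from the endpoints:
          (∀ x ∈ Icc (a + 2 * δ) (b - 2 * δ), θt x = θ₀ x) ∧
          -- (iii) blow-up rate of the modification:
          (∀ k : ℕ, k ≤ 4 →
            Real.sqrt (∫ x in Icc a b,
                (iteratedDeriv k θt x - iteratedDeriv k θ₀ x) ^ 2) ≤
              C * δ ^ ((1:ℝ)/2 - (k:ℝ))) := by
  obtain ⟨K, hK0, hKb⟩ := comb_pair_bound (α₀ - θ₀ a) (α₁ - iteratedDeriv 2 θ₀ a)
    (α₂ - iteratedDeriv 4 θ₀ a) (β₀ - θ₀ b) (β₁ - iteratedDeriv 2 θ₀ b)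
    (β₂ - iteratedDeriv 4 θ₀ b) ((b - a)/8) (by linarith)
  refine ⟨2*K + 1, by positivity, ?_⟩
  intro δ hδ
  obtain ⟨hδ0, hδD⟩ := hδ
  have hδne : δ ≠ 0 := ne_of_gt hδ0
  obtain ⟨θt, hC, h0a, h2a, h4a, h0b, h2b, h4b, hmid, hint⟩ :=
    keyConstruction a b δ θ₀
      (comb (α₀ - θ₀ a) (δ^2*(α₁ - iteratedDeriv 2 θ₀ a)) (δ^4*(α₂ - iteratedDeriv 4 θ₀ a)))
      (comb (β₀ - θ₀ b) (δ^2*(β₁ - iteratedDeriv 2 θ₀ b)) (δ^4*(β₂ - iteratedDeriv 4 θ₀ b)))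
      hθ₀ _ _ _ _ _ _ K hδ0 (by linarith)
      (comb_contDiff _ _ _) (comb_contDiff _ _ _)
      (comb_val0 _ _ _) (comb_iter2 _ _ _) (comb_iter4 _ _ _)
      (comb_val0 _ _ _) (comb_iter2 _ _ _) (comb_iter4 _ _ _)
      (fun u hu => comb_far _ _ _ hu) (fun u hu => comb_far _ _ _ hu)
      (fun k u hu => comb_iter_far _ _ _ k hu) (fun k u hu => comb_iter_far _ _ _ k hu)
      (fun k hk u v => hKb δ hδ0 hδD.le k hk u v)
  have hinv2 : (1/δ)^2 * δ^2 = 1 := by field_simp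
  have hinv4 : (1/δ)^4 * δ^4 = 1 := by field_simp
  refine ⟨θt, hC, ?_, ?_, ?_, ?_, ?_, ?_, hmid, ?_⟩
  · rw [h0a]; ring
  · rw [h2a, ← mul_assoc, hinv2, one_mul]; ring
  · rw [h4a, ← mul_assoc, hinv4, one_mul]; ring
  · rw [h0b]; ring
  · rw [h2b, ← mul_assoc, hinv2, one_mul]; ring
  · rw [h4b, ← mul_assoc, hinv4, one_mul]; ring
  · intro k hk
    exact le_trans (hint k hk) (rpow_step δ K k hδ0 hK0)
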